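/- For all integers n ≥ 3 and all integers k with 1 ≤ k ≤ n−1, ∑_{j=k+1}^{n−1} [∏_{m=j+2}^{n} (1 − 3/C(m,2))] · (1/C(j+1,2)) · [∏_{m=k+2}^{j} (1 − 1/C(m,2))] · (1/C(k+1,2)) = 4(n+1)(n−k−1)/((n−1)(n−2)(k+1)(k+2)(k+3)), where C(m,2) = m(m−1)/2 and empty products equal 1. -/

import Mathlib

lemma prodB (k : ℕ) (hk : 1 ≤ k) : ∀ j : ℕ, k + 1 ≤ j →
    ∏ m ∈ Finset.Icc (k + 2) j, (1 - 1 / ((m : ℝ) * ((m : ℝ) - 1) / 2)) =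
      (k : ℝ) * ((j : ℝ) + 1) / (((j : ℝ) - 1) * ((k : ℝ) + 2)) := by
  intro j hj
  induction j, hj using Nat.le_induction with
  | base =>
      rw [Finset.Icc_eq_empty (by omega), Finset.prod_empty]
      have hk' : (1 : ℝ) ≤ (k : ℝ) := by exact_mod_cast hk
      push_cast
      field_simp
      rw [eq_div_iff (by nlinarith)]; ring
  | succ j hj ih =>
      rw [Finset.prod_Icc_succ_top (by omega), ih]
      have hk' : (1 : ℝ) ≤ (k : ℝ) := by exact_mod_cast hk
      have hj' : (k : ℝ) + 1 ≤ (j : ℝ) := by exact_mod_cast hj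
      have h1 : (j : ℝ) - 1 ≠ 0 := by nlinarith
      have h2 : (j : ℝ) ≠ 0 := by nlinarith
      have h3 : (j : ℝ) + 1 ≠ 0 := by nlinarith
      have h4 : (k : ℝ) + 2 ≠ 0 := by nlinarith
      push_cast
      field_simp
      ring_nf
      rw [mul_inv_cancel₀ h2, sq, mul_assoc, mul_inv_cancel₀ h2, mul_one]

lemma stmtAux (k : ℕ) (hk : 1 ≤ k) : ∀ n : ℕ, k + 2 ≤ n →
    ∑ j ∈ Finset.Icc (k + 1) (n - 1),
      (∏ m ∈ Finset.Icc (j + 2) n, (1 - 3 / ((m : ℝ) * ((m : ℝ) - 1) / 2))) *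
        (1 / (((j : ℝ) + 1) * ((j : ℝ) + 1 - 1) / 2)) *
      (∏ m ∈ Finset.Icc (k + 2) j, (1 - 1 / ((m : ℝ) * ((m : ℝ) - 1) / 2))) *
        (1 / (((k : ℝ) + 1) * ((k : ℝ) + 1 - 1) / 2)) =
    4 * ((n : ℝ) + 1) * ((n : ℝ) - (k : ℝ) - 1) /
      (((n : ℝ) - 1) * ((n : ℝ) - 2) * ((k : ℝ) + 1) * ((k : ℝ) + 2) * ((k : ℝ) + 3)) := by
  intro n hn
  have hk' : (1 : ℝ) ≤ (k : ℝ) := by exact_mod_cast hk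
  have hk0 : (k : ℝ) ≠ 0 := by nlinarith
  have hk1 : (k : ℝ) + 1 ≠ 0 := by nlinarith
  have hk2 : (k : ℝ) + 2 ≠ 0 := by nlinarith
  have hk3 : (k : ℝ) + 3 ≠ 0 := by nlinarith
  induction n, hn using Nat.le_induction with
  | base =>
      rw [show k + 2 - 1 = k + 1 from rfl, Finset.Icc_self, Finset.sum_singleton]
      rw [Finset.Icc_eq_empty (by omega), Finset.prod_empty]
      rw [Finset.Icc_eq_empty (by omega), Finset.prod_empty]
      push_cast
      have b1 : ((k : ℝ) + 2 - 1) ≠ 0 := by nlinarith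
      have b2 : ((k : ℝ) + 2 - 2) ≠ 0 := by nlinarith
      have b3 : ((k : ℝ) + 1 - 1) ≠ 0 := by nlinarith
      have b4 : ((k : ℝ) + 1 + 1) ≠ 0 := by nlinarith
      have b5 : ((k : ℝ) + 1 + 1 - 1) ≠ 0 := by nlinarith
      field_simp
      ring
  | succ n hn ih =>
      obtain ⟨p, rfl⟩ : ∃ p, n = p + 1 := ⟨n - 1, by omega⟩
      simp only [Nat.add_sub_cancel] at ih ⊢
      have hn' : (k : ℝ) + 2 ≤ (p : ℝ) + 1 := by exact_mod_cast hn
      have h1 : (p : ℝ) ≠ 0 := by nlinarith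
      have h2 : (p : ℝ) - 1 ≠ 0 := by nlinarith
      have h3 : (p : ℝ) + 1 ≠ 0 := by nlinarith
      have h4 : (p : ℝ) + 2 ≠ 0 := by nlinarith
      rw [Finset.sum_Icc_succ_top (by omega : k + 1 ≤ p + 1)]
      rw [Finset.Icc_eq_empty (by omega : ¬ p + 1 + 2 ≤ p + 1 + 1), Finset.prod_empty]
      rw [prodB k hk (p + 1) (by omega)]
      have hstep : ∑ j ∈ Finset.Icc (k + 1) p,
          (∏ m ∈ Finset.Icc (j + 2) (p + 1 + 1), (1 - 3 / ((m : ℝ) * ((m : ℝ) - 1) / 2))) *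
            (1 / (((j : ℝ) + 1) * ((j : ℝ) + 1 - 1) / 2)) *
          (∏ m ∈ Finset.Icc (k + 2) j, (1 - 1 / ((m : ℝ) * ((m : ℝ) - 1) / 2))) *
            (1 / (((k : ℝ) + 1) * ((k : ℝ) + 1 - 1) / 2)) =
          (1 - 3 / ((((p : ℝ) + 2)) * (((p : ℝ) + 2) - 1) / 2)) *
          ∑ j ∈ Finset.Icc (k + 1) p,
          (∏ m ∈ Finset.Icc (j + 2) (p + 1), (1 - 3 / ((m : ℝ) * ((m : ℝ) - 1) / 2))) *
            (1 / (((j : ℝ) + 1) * ((j : ℝ) + 1 - 1) / 2)) *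
          (∏ m ∈ Finset.Icc (k + 2) j, (1 - 1 / ((m : ℝ) * ((m : ℝ) - 1) / 2))) *
            (1 / (((k : ℝ) + 1) * ((k : ℝ) + 1 - 1) / 2)) := by
        rw [Finset.mul_sum]
        refine Finset.sum_congr rfl fun j hj => ?_
        have hj' := Finset.mem_Icc.mp hj
        rw [Finset.prod_Icc_succ_top (by omega : j + 2 ≤ p + 1 + 1)]
        push_cast
        ring
      rw [hstep, ih]
      push_cast
      have b1 : ((p : ℝ) + 2 - 1) ≠ 0 := by nlinarith
      have b2 : ((p : ℝ) + 1 - 1) ≠ 0 := by nlinarith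
      have b3 : ((p : ℝ) + 1 - 2) ≠ 0 := by nlinarith
      have b4 : ((p : ℝ) + 1 + 1) ≠ 0 := by nlinarith
      have b5 : ((p : ℝ) + 1 + 1 - 1) ≠ 0 := by nlinarith
      have b6 : ((p : ℝ) + 1 + 1 - 2) ≠ 0 := by nlinarith
      have b7 : ((k : ℝ) + 1 - 1) ≠ 0 := by nlinarith
      field_simp
      ring

/-- Probability that two random pairs of tips sharing exactly one tip both coalesce
at the `k`-th speciation event (case (ii)), for a Yule tree with `n` tips. -/
theorem stmt1 (n k : ℕ) (hn : 3 ≤ n) (hk1 : 1 ≤ k) (hk2 : k ≤ n - 1) :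
    ∑ j ∈ Finset.Icc (k + 1) (n - 1),
      (∏ m ∈ Finset.Icc (j + 2) n, (1 - 3 / ((m : ℝ) * ((m : ℝ) - 1) / 2))) *
        (1 / (((j : ℝ) + 1) * ((j : ℝ) + 1 - 1) / 2)) *
      (∏ m ∈ Finset.Icc (k + 2) j, (1 - 1 / ((m : ℝ) * ((m : ℝ) - 1) / 2))) *
        (1 / (((k : ℝ) + 1) * ((k : ℝ) + 1 - 1) / 2)) =
    4 * ((n : ℝ) + 1) * ((n : ℝ) - (k : ℝ) - 1) /
      (((n : ℝ) - 1) * ((n : ℝ) - 2) * ((k : ℝ) + 1) * ((k : ℝ) + 2) * ((k : ℝ) + 3)) := by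
  by_cases h : k + 2 ≤ n
  · exact stmtAux k hk1 n h
  · have hkn : k = n - 1 := by omega
    rw [Finset.Icc_eq_empty (by omega), Finset.sum_empty]
    have hc : (k : ℝ) = (n : ℝ) - 1 := by
      subst hkn
      push_cast [Nat.cast_sub (by omega : 1 ≤ n)]
      ring
    rw [hc, show (n : ℝ) - ((n : ℝ) - 1) - 1 = 0 from by ring]
    simp
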